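/- Let ν be a Lévy measure on ℝ∖{0} with C₂ := ∫ (e^x − 1)² ν(dx) < ∞, let σ ≥ 0, μ ∈ ℝ, and define μ̂ := μ + σ²/2 + ∫ (e^x − 1 − x) ν(dx). Suppose 0 ≥ μ̂ > −σ² − C₂. Then the measure ν*(dx) := (1 − μ̂(e^x − 1)/(σ² + C₂)) ν(dx) is a (nonnegative) measure on ℝ∖{0} satisfying ∫ (x² ∧ 1) ν*(dx) < ∞, i.e. ν* is again a Lévy measure. -/
import Mathlib


open MeasureTheory

/-- The minimal-martingale-measure Lévy measure
`ν*(dx) = (1 - μ̂(e^x - 1)/(σ² + C₂)) ν(dx)` is again a Lévy measure: its density is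
nonnegative and `∫ (x² ∧ 1) ν*(dx) < ∞`, where `C₂ = ∫ (e^x - 1)² ν(dx)` and
`μ̂ = μ + σ²/2 + ∫ (e^x - 1 - x) ν(dx)` satisfies `0 ≥ μ̂ > -σ² - C₂`. -/
theorem stmt_14 (ν : Measure ℝ) (hν0 : ν {0} = 0)
    (hνLevy : ∫⁻ x : ℝ, ENNReal.ofReal (min (x ^ 2) 1) ∂ν < ⊤)
    (hC2 : Integrable (fun x : ℝ => (Real.exp x - 1) ^ 2) ν)
    (hμint : Integrable (fun x : ℝ => Real.exp x - 1 - x) ν)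
    (σ μ : ℝ) (hσ : 0 ≤ σ)
    (hhatμ₁ : μ + σ ^ 2 / 2 + ∫ x, (Real.exp x - 1 - x) ∂ν ≤ 0)
    (hhatμ₂ : -(σ ^ 2 + ∫ x, (Real.exp x - 1) ^ 2 ∂ν) <
      μ + σ ^ 2 / 2 + ∫ x, (Real.exp x - 1 - x) ∂ν) :
    (∀ x : ℝ, 0 ≤ 1 - (μ + σ ^ 2 / 2 + ∫ y, (Real.exp y - 1 - y) ∂ν) * (Real.exp x - 1)
        / (σ ^ 2 + ∫ y, (Real.exp y - 1) ^ 2 ∂ν)) ∧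
    ∫⁻ x : ℝ, ENNReal.ofReal (min (x ^ 2) 1)
      ∂(ν.withDensity fun x => ENNReal.ofReal
        (1 - (μ + σ ^ 2 / 2 + ∫ y, (Real.exp y - 1 - y) ∂ν) * (Real.exp x - 1)
          / (σ ^ 2 + ∫ y, (Real.exp y - 1) ^ 2 ∂ν))) < ⊤ := by
  set I2 : ℝ := ∫ x, (Real.exp x - 1) ^ 2 ∂ν with hI2def
  set m : ℝ := μ + σ ^ 2 / 2 + ∫ x, (Real.exp x - 1 - x) ∂ν with hmdef
  set S : ℝ := σ ^ 2 + I2 with hSdef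
  have hS : 0 < S := by linarith
  set K : ℝ := -m / S with hKdef
  have hK : 0 ≤ K := div_nonneg (by linarith) hS.le
  -- pointwise nonnegativity of the density
  have hpos : ∀ x : ℝ, 0 ≤ 1 - m * (Real.exp x - 1) / S := by
    intro x
    rw [sub_nonneg, div_le_one hS]
    nlinarith [Real.exp_pos x, mul_nonneg (neg_nonneg.mpr hhatμ₁) (Real.exp_pos x).le]
  refine ⟨hpos, ?_⟩
  -- measurability
  have hgm : Measurable fun x : ℝ =>
      ENNReal.ofReal (1 - m * (Real.exp x - 1) / S) := by
    apply Measurable.ennreal_ofReal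
    fun_prop
  have hfm : Measurable fun x : ℝ => ENNReal.ofReal (min (x ^ 2) 1) := by
    apply Measurable.ennreal_ofReal
    fun_prop
  rw [lintegral_withDensity_eq_lintegral_mul ν hgm hfm]
  -- pointwise bound
  have hptwise : ∀ x : ℝ,
      (ENNReal.ofReal (1 - m * (Real.exp x - 1) / S)) * ENNReal.ofReal (min (x ^ 2) 1)
        ≤ ENNReal.ofReal (1 + K / 2) * ENNReal.ofReal (min (x ^ 2) 1)
          + ENNReal.ofReal (K / 2) * ENNReal.ofReal ((Real.exp x - 1) ^ 2) := by
    intro x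
    set M : ℝ := min (x ^ 2) 1 with hMdef
    set t : ℝ := Real.exp x - 1 with htdef
    have hM0 : 0 ≤ M := le_min (sq_nonneg x) zero_le_one
    have hM1 : M ≤ 1 := min_le_right _ _
    have hd : 1 - m * t / S = 1 + K * t := by
      rw [hKdef]; ring
    have key : (1 - m * t / S) * M ≤ (1 + K / 2) * M + (K / 2) * t ^ 2 := by
      rw [hd]
      have h1 : 0 ≤ M + t ^ 2 - 2 * t * M := by nlinarith [sq_nonneg (t - M)]
      have h2 : 0 ≤ K / 2 * (M + t ^ 2 - 2 * t * M) := mul_nonneg (by linarith) h1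
      calc (1 + K * t) * M
          = (1 + K / 2) * M + K / 2 * t ^ 2 - K / 2 * (M + t ^ 2 - 2 * t * M) := by ring
        _ ≤ (1 + K / 2) * M + K / 2 * t ^ 2 := sub_le_self _ h2
    calc ENNReal.ofReal (1 - m * t / S) * ENNReal.ofReal M
        = ENNReal.ofReal ((1 - m * t / S) * M) := (ENNReal.ofReal_mul (hpos x)).symm
      _ ≤ ENNReal.ofReal ((1 + K / 2) * M + (K / 2) * t ^ 2) := ENNReal.ofReal_le_ofReal key
      _ ≤ ENNReal.ofReal ((1 + K / 2) * M) + ENNReal.ofReal ((K / 2) * t ^ 2) :=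
          ENNReal.ofReal_add_le
      _ = ENNReal.ofReal (1 + K / 2) * ENNReal.ofReal M
          + ENNReal.ofReal (K / 2) * ENNReal.ofReal (t ^ 2) := by
          rw [ENNReal.ofReal_mul (by linarith), ENNReal.ofReal_mul (by linarith)]
  calc ∫⁻ x, ((fun x : ℝ => ENNReal.ofReal (1 - m * (Real.exp x - 1) / S)) *
          fun x : ℝ => ENNReal.ofReal (min (x ^ 2) 1)) x ∂ν
      ≤ ∫⁻ x, (ENNReal.ofReal (1 + K / 2) * ENNReal.ofReal (min (x ^ 2) 1)
          + ENNReal.ofReal (K / 2) * ENNReal.ofReal ((Real.exp x - 1) ^ 2)) ∂ν :=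
        lintegral_mono fun x => hptwise x
    _ = ENNReal.ofReal (1 + K / 2) * ∫⁻ x, ENNReal.ofReal (min (x ^ 2) 1) ∂ν
          + ENNReal.ofReal (K / 2) * ∫⁻ x, ENNReal.ofReal ((Real.exp x - 1) ^ 2) ∂ν := by
        rw [lintegral_add_left (hfm.const_mul _), lintegral_const_mul _ hfm,
          lintegral_const_mul _ (by apply Measurable.ennreal_ofReal; fun_prop)]
    _ < ⊤ := by
        have h2 : ∫⁻ x, ENNReal.ofReal ((Real.exp x - 1) ^ 2) ∂ν < ⊤ :=
          hC2.lintegral_lt_top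
        exact ENNReal.add_lt_top.mpr
          ⟨ENNReal.mul_lt_top ENNReal.ofReal_lt_top hνLevy,
           ENNReal.mul_lt_top ENNReal.ofReal_lt_top h2⟩
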